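/- Let P ⊆ {1,…,n}×{1,…,n} be a sparsity pattern and let Π_P : ℂ^{n×n} → ℂ^{n×n} be the orthogonal projection that sets to zero all entries with indices outside P. Suppose in addition (to the path setup) that for every t the matrix E(t) has all entries outside P equal to zero, ‖E(t)‖_F = 1, and E solves the pattern-projected differential equation Ė = −Π_P(S) + Re⟨E, Π_P(S)⟩E, where S(t) = y y^H G^H + G^H x x^H. Then d/dt |y(t)^H x(t)| = −ε |y(t)^H x(t)| · ( ‖Π_P(S)‖_F² − (Re⟨E, Π_P(S)⟩)² ) ≤ 0; in particular t ↦ |y(t)^H x(t)| is monotonically non-increasing along solutions. -/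

import Mathlib

open Matrix

/-- Frobenius inner product `⟨A,B⟩ = trace(Aᴴ B)`. -/
noncomputable def frobInner {n : ℕ} (A B : Matrix (Fin n) (Fin n) ℂ) : ℂ :=
  (Aᴴ * B).trace

/-- Frobenius norm `‖A‖_F = √⟨A,A⟩`. -/
noncomputable def frobNorm {n : ℕ} (A : Matrix (Fin n) (Fin n) ℂ) : ℝ :=
  Real.sqrt (frobInner A A).re

/-- `G` is a group inverse of `M`. -/
def IsGroupInverse {n : ℕ} (M G : Matrix (Fin n) (Fin n) ℂ) : Prop :=
  M * G = G * M ∧ G * M * G = G ∧ M * G * M = M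

/-- The matrix `S = y yᴴ Gᴴ + Gᴴ x xᴴ`. -/
noncomputable def Smat {n : ℕ} (x y : Fin n → ℂ) (G : Matrix (Fin n) (Fin n) ℂ) :
    Matrix (Fin n) (Fin n) ℂ :=
  vecMulVec y (star y) * Gᴴ + Gᴴ * vecMulVec x (star x)

/-- The orthogonal projection onto the matrices with sparsity pattern `P`:
entries with indices outside `P` are set to zero. -/
def PiP {n : ℕ} (P : Finset (Fin n × Fin n)) (Z : Matrix (Fin n) (Fin n) ℂ) :
    Matrix (Fin n) (Fin n) ℂ :=
  Matrix.of fun i j => if (i, j) ∈ P then Z i j else 0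


lemma trace_mul_vecMulVec {n : ℕ} (M : Matrix (Fin n) (Fin n) ℂ) (w v : Fin n → ℂ) :
    (M * vecMulVec w v).trace = v ⬝ᵥ (M *ᵥ w) := by
  simp only [Matrix.trace, Matrix.diag_apply, Matrix.mul_apply, vecMulVec_apply,
    Matrix.mulVec, dotProduct, Finset.mul_sum]
  exact Finset.sum_congr rfl fun i _ => Finset.sum_congr rfl fun j _ => by ring

lemma frobInner_eq_sum {n : ℕ} (A B : Matrix (Fin n) (Fin n) ℂ) :
    frobInner A B = ∑ j, ∑ i, star (A i j) * B i j := by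
  simp [frobInner, Matrix.trace, Matrix.diag_apply, Matrix.mul_apply,
    Matrix.conjTranspose_apply]

lemma frobInner_self_re_nonneg {n : ℕ} (A : Matrix (Fin n) (Fin n) ℂ) :
    0 ≤ (frobInner A A).re := by
  rw [frobInner_eq_sum]
  simp only [Complex.re_sum]
  refine Finset.sum_nonneg fun j _ => Finset.sum_nonneg fun i _ => ?_
  have : (star (A i j) * A i j).re = (A i j).re * (A i j).re + (A i j).im * (A i j).im := by
    simp [Complex.mul_re]
  rw [this]; nlinarith [sq_nonneg (A i j).re, sq_nonneg (A i j).im]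

lemma frobNorm_sq {n : ℕ} (A : Matrix (Fin n) (Fin n) ℂ) :
    frobNorm A ^ 2 = (frobInner A A).re :=
  Real.sq_sqrt (frobInner_self_re_nonneg A)

lemma key_trace {n : ℕ} (x y : Fin n → ℂ) (G W : Matrix (Fin n) (Fin n) ℂ) :
    star x ⬝ᵥ (G *ᵥ (W *ᵥ x)) + star y ⬝ᵥ ((W * G) *ᵥ y)
      = starRingEnd ℂ (frobInner W (Smat x y G)) := by
  have hY : (vecMulVec y (star y))ᴴ = vecMulVec y (star y) := by
    ext i j; simp [vecMulVec_apply, Matrix.conjTranspose_apply, mul_comm]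
  have hX : (vecMulVec x (star x))ᴴ = vecMulVec x (star x) := by
    ext i j; simp [vecMulVec_apply, Matrix.conjTranspose_apply, mul_comm]
  have h1 : (starRingEnd ℂ) (frobInner W (Smat x y G)) = ((Smat x y G)ᴴ * W).trace := by
    have he : (Smat x y G)ᴴ * W = (Wᴴ * Smat x y G)ᴴ := by
      rw [Matrix.conjTranspose_mul, Matrix.conjTranspose_conjTranspose]
    rw [frobInner, he, Matrix.trace_conjTranspose]
    rfl
  rw [h1]
  have hS : (Smat x y G)ᴴ = G * vecMulVec y (star y) + vecMulVec x (star x) * G := by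
    simp only [Smat, Matrix.conjTranspose_add, Matrix.conjTranspose_mul,
      Matrix.conjTranspose_conjTranspose, hY, hX]
  rw [hS, Matrix.add_mul, Matrix.trace_add]
  have h2 : (G * vecMulVec y (star y) * W).trace = star y ⬝ᵥ ((W * G) *ᵥ y) := by
    rw [Matrix.trace_mul_comm, ← Matrix.mul_assoc, trace_mul_vecMulVec]
  have h3 : (vecMulVec x (star x) * G * W).trace = star x ⬝ᵥ (G *ᵥ (W *ᵥ x)) := by
    rw [Matrix.mul_assoc, Matrix.trace_mul_comm, trace_mul_vecMulVec,
      Matrix.mulVec_mulVec]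
  rw [h2, h3]; ring

lemma frobInner_PiP_right {n : ℕ} (P : Finset (Fin n × Fin n))
    (Z : Matrix (Fin n) (Fin n) ℂ) :
    frobInner (PiP P Z) Z = frobInner (PiP P Z) (PiP P Z) := by
  rw [frobInner_eq_sum, frobInner_eq_sum]
  refine Finset.sum_congr rfl fun j _ => Finset.sum_congr rfl fun i _ => ?_
  simp only [PiP, Matrix.of_apply]
  split <;> simp

lemma frobInner_pattern {n : ℕ} (P : Finset (Fin n × Fin n))
    (E Z : Matrix (Fin n) (Fin n) ℂ) (hE : ∀ i j, (i, j) ∉ P → E i j = 0) :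
    frobInner E Z = frobInner E (PiP P Z) := by
  rw [frobInner_eq_sum, frobInner_eq_sum]
  refine Finset.sum_congr rfl fun j _ => Finset.sum_congr rfl fun i _ => ?_
  simp only [PiP, Matrix.of_apply]
  by_cases h : (i, j) ∈ P
  · simp [h]
  · simp [h, hE i j h]

lemma frobInner_add_left {n : ℕ} (A B C : Matrix (Fin n) (Fin n) ℂ) :
    frobInner (A + B) C = frobInner A C + frobInner B C := by
  simp [frobInner, Matrix.conjTranspose_add, Matrix.add_mul]

lemma frobInner_neg_left {n : ℕ} (A C : Matrix (Fin n) (Fin n) ℂ) :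
    frobInner (-A) C = -frobInner A C := by
  simp [frobInner, Matrix.neg_mul]

lemma frobInner_sub_left {n : ℕ} (A B C : Matrix (Fin n) (Fin n) ℂ) :
    frobInner (A - B) C = frobInner A C - frobInner B C := by
  simp [frobInner, Matrix.conjTranspose_sub, Matrix.sub_mul]

lemma frobInner_sub_right {n : ℕ} (A B C : Matrix (Fin n) (Fin n) ℂ) :
    frobInner A (B - C) = frobInner A B - frobInner A C := by
  simp [frobInner, Matrix.mul_sub]

lemma frobInner_real_smul_left {n : ℕ} (r : ℝ) (A C : Matrix (Fin n) (Fin n) ℂ) :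
    frobInner (r • A) C = (r : ℂ) * frobInner A C := by
  simp [frobInner, Matrix.conjTranspose_smul, Matrix.smul_mul, Matrix.trace_smul,
    Complex.real_smul]

lemma frobInner_real_smul_right {n : ℕ} (r : ℝ) (A C : Matrix (Fin n) (Fin n) ℂ) :
    frobInner A (r • C) = (r : ℂ) * frobInner A C := by
  simp [frobInner, Matrix.mul_smul, Matrix.trace_smul, Complex.real_smul]

lemma frobInner_conj_symm {n : ℕ} (A B : Matrix (Fin n) (Fin n) ℂ) :
    frobInner B A = starRingEnd ℂ (frobInner A B) := by
  have he : Bᴴ * A = (Aᴴ * B)ᴴ := by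
    rw [Matrix.conjTranspose_mul, Matrix.conjTranspose_conjTranspose]
  rw [frobInner, frobInner, he, Matrix.trace_conjTranspose]
  rfl

lemma cauchy_schwarz_re {n : ℕ} (Emat B : Matrix (Fin n) (Fin n) ℂ)
    (hE : (frobInner Emat Emat).re = 1) :
    (frobInner Emat B).re ^ 2 ≤ (frobInner B B).re := by
  set r : ℝ := (frobInner Emat B).re with hr
  have h0 := frobInner_self_re_nonneg (B - r • Emat)
  have hexp : frobInner (B - r • Emat) (B - r • Emat)
      = frobInner B B - (r:ℂ) * frobInner B Emat
        - ((r:ℂ) * frobInner Emat B - (r:ℂ) * ((r:ℂ) * frobInner Emat Emat)) := by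
    rw [frobInner_sub_left, frobInner_sub_right, frobInner_sub_right,
      frobInner_real_smul_left, frobInner_real_smul_right, frobInner_real_smul_right,
      frobInner_real_smul_left]
  rw [hexp] at h0
  have hsymm : (frobInner B Emat).re = r := by
    rw [frobInner_conj_symm]; simp [hr]
  simp only [Complex.sub_re, Complex.mul_re, Complex.ofReal_re, Complex.ofReal_im,
    zero_mul, sub_zero, hsymm, hE] at h0
  nlinarith [h0]

lemma hasDerivAt_dotProduct {n : ℕ} {u v : ℝ → Fin n → ℂ} {u' v' : Fin n → ℂ} {t : ℝ}
    (hu : ∀ i, HasDerivAt (fun s => u s i) (u' i) t)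
    (hv : ∀ i, HasDerivAt (fun s => v s i) (v' i) t) :
    HasDerivAt (fun s => u s ⬝ᵥ v s) (u' ⬝ᵥ v t + u t ⬝ᵥ v') t := by
  have h := HasDerivAt.fun_sum (u := Finset.univ)
    (fun i _ => ((hu i).mul (hv i)))
  simp only [dotProduct]
  rw [Finset.sum_add_distrib] at h
  exact h

theorem stmt19 {n : ℕ} (hn : 2 ≤ n) (P : Finset (Fin n × Fin n))
    (A : Matrix (Fin n) (Fin n) ℂ) (ε : ℝ) (hε : 0 < ε)
    (E E' : ℝ → Matrix (Fin n) (Fin n) ℂ)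
    (x x' y y' : ℝ → (Fin n → ℂ))
    (lam lam' : ℝ → ℂ)
    (G G' : ℝ → Matrix (Fin n) (Fin n) ℂ)
    (hEdiff : ∀ t i j, HasDerivAt (fun s => E s i j) (E' t i j) t)
    (hxdiff : ∀ t i, HasDerivAt (fun s => x s i) (x' t i) t)
    (hydiff : ∀ t i, HasDerivAt (fun s => y s i) (y' t i) t)
    (hlamdiff : ∀ t, HasDerivAt lam (lam' t) t)
    (hGdiff : ∀ t i j, HasDerivAt (fun s => G s i j) (G' t i j) t)
    (heig : ∀ t, (A + (ε : ℂ) • E t) *ᵥ x t = lam t • x t)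
    (hleig : ∀ t, star (y t) ᵥ* (A + (ε : ℂ) • E t) = lam t • star (y t))
    (hxnorm : ∀ t, star (x t) ⬝ᵥ x t = 1)
    (hynorm : ∀ t, star (y t) ⬝ᵥ y t = 1)
    (hyx : ∀ t, star (y t) ⬝ᵥ x t ≠ 0)
    (hG : ∀ t, IsGroupInverse (A + (ε : ℂ) • E t - lam t • 1) (G t))
    (hGx : ∀ t, G t *ᵥ x t = 0)
    (hyG : ∀ t, star (y t) ᵥ* G t = 0)
    (hx' : ∀ t, x' t =
      (star (x t) ⬝ᵥ (G t *ᵥ (((ε : ℂ) • E' t) *ᵥ x t))) • x t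
        - G t *ᵥ (((ε : ℂ) • E' t) *ᵥ x t))
    (hy' : ∀ t, star (y' t) =
      (star (y t) ⬝ᵥ ((((ε : ℂ) • E' t) * G t) *ᵥ y t)) • star (y t)
        - star (y t) ᵥ* (((ε : ℂ) • E' t) * G t))
    (hpattern : ∀ t i j, (i, j) ∉ P → E t i j = 0)
    (hEnorm : ∀ t, frobNorm (E t) = 1)
    (hODE : ∀ t, E' t = -(PiP P (Smat (x t) (y t) (G t)))
        + (frobInner (E t) (PiP P (Smat (x t) (y t) (G t)))).re • E t) :
    (∀ t, HasDerivAt (fun s => ‖star (y s) ⬝ᵥ x s‖)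
        (-(ε * ‖star (y t) ⬝ᵥ x t‖) *
          (frobNorm (PiP P (Smat (x t) (y t) (G t))) ^ 2
            - (frobInner (E t) (PiP P (Smat (x t) (y t) (G t)))).re ^ 2)) t
      ∧ -(ε * ‖star (y t) ⬝ᵥ x t‖) *
          (frobNorm (PiP P (Smat (x t) (y t) (G t))) ^ 2
            - (frobInner (E t) (PiP P (Smat (x t) (y t) (G t)))).re ^ 2) ≤ 0)
    ∧ Antitone (fun t => ‖star (y t) ⬝ᵥ x t‖) := by
  have main : ∀ t, HasDerivAt (fun s => ‖star (y s) ⬝ᵥ x s‖)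
      (-(ε * ‖star (y t) ⬝ᵥ x t‖) *
        (frobNorm (PiP P (Smat (x t) (y t) (G t))) ^ 2
          - (frobInner (E t) (PiP P (Smat (x t) (y t) (G t)))).re ^ 2)) t := by
    intro t
    set S := Smat (x t) (y t) (G t) with hS
    set B := PiP P S with hB
    set r : ℝ := (frobInner (E t) B).re with hr
    set Nf : ℝ := frobNorm B ^ 2 with hNf
    set ft : ℂ := star (y t) ⬝ᵥ x t with hft
    obtain ⟨c, hc⟩ : ∃ c : ℂ, c = (ε : ℂ) * (starRingEnd ℂ) (frobInner (E' t) S) :=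
      ⟨_, rfl⟩
    -- derivative of the dot product
    have hfd0 : HasDerivAt (fun s => star (y s) ⬝ᵥ x s)
        (star (y' t) ⬝ᵥ x t + star (y t) ⬝ᵥ x' t) t := by
      exact hasDerivAt_dotProduct (fun i => (hydiff t i).star) (fun i => hxdiff t i)
    -- the derivative equals c * ft
    have e1 : star (y t) ᵥ* (((ε : ℂ) • E' t) * G t) ⬝ᵥ x t = 0 := by
      rw [← Matrix.dotProduct_mulVec, ← Matrix.mulVec_mulVec, hGx t,
        Matrix.mulVec_zero, dotProduct_zero]
    have e2 : star (y t) ⬝ᵥ (G t *ᵥ (((ε : ℂ) • E' t) *ᵥ x t)) = 0 := by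
      rw [Matrix.dotProduct_mulVec, hyG t, zero_dotProduct]
    have e3 : star (x t) ⬝ᵥ (G t *ᵥ (((ε : ℂ) • E' t) *ᵥ x t))
        + star (y t) ⬝ᵥ ((((ε : ℂ) • E' t) * G t) *ᵥ y t) = c := by
      rw [hc, ← key_trace (x t) (y t) (G t) (E' t), Matrix.smul_mulVec,
        Matrix.smul_mul, Matrix.smul_mulVec, Matrix.mulVec_smul,
        dotProduct_smul, dotProduct_smul, smul_eq_mul, smul_eq_mul]
      ring
    have hderiv_eq : star (y' t) ⬝ᵥ x t + star (y t) ⬝ᵥ x' t = c * ft := by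
      rw [hy' t, hx' t, sub_dotProduct, smul_dotProduct, dotProduct_sub,
        dotProduct_smul, e1, e2, ← e3, ← hft]
      ring_nf
    have hfd : HasDerivAt (fun s => star (y s) ⬝ᵥ x s) (c * ft) t := by
      rw [← hderiv_eq]; exact hfd0
    -- real part of c
    have hu : c.re = ε * (r ^ 2 - Nf) := by
      have hz : frobInner (E' t) S = -(frobInner B B) + (r : ℂ) * frobInner (E t) B := by
        rw [hr, hB, hODE t, frobInner_add_left, frobInner_neg_left, frobInner_real_smul_left,
          frobInner_PiP_right, frobInner_pattern P (E t) S (hpattern t)]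
      rw [hc, hz, hNf, frobNorm_sq]
      simp only [Complex.mul_re, Complex.add_re, Complex.neg_re, Complex.ofReal_re,
        Complex.ofReal_im, Complex.conj_re, Complex.conj_im, Complex.add_im,
        Complex.neg_im, Complex.mul_im]
      ring
    -- nonvanishing
    have hftne : ft ≠ 0 := hyx t
    have hnsne : ft.re * ft.re + ft.im * ft.im ≠ 0 := by
      rw [← Complex.normSq_apply]
      exact ne_of_gt (Complex.normSq_pos.2 hftne)
    -- componentwise derivatives
    have hre : HasDerivAt (fun s => (star (y s) ⬝ᵥ x s).re) ((c * ft).re) t := by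
      simpa [Function.comp_def] using (Complex.reCLM.hasFDerivAt.comp_hasDerivAt t hfd)
    have him : HasDerivAt (fun s => (star (y s) ⬝ᵥ x s).im) ((c * ft).im) t := by
      simpa [Function.comp_def] using (Complex.imCLM.hasFDerivAt.comp_hasDerivAt t hfd)
    have hg : HasDerivAt
        (fun s => (star (y s) ⬝ᵥ x s).re * (star (y s) ⬝ᵥ x s).re
          + (star (y s) ⬝ᵥ x s).im * (star (y s) ⬝ᵥ x s).im)
        ((c * ft).re * ft.re + ft.re * (c * ft).re
          + ((c * ft).im * ft.im + ft.im * (c * ft).im)) t := by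
      exact ((hre.mul hre).add (him.mul him))
    have habs := hg.sqrt hnsne
    have hgoal : (fun s => ‖star (y s) ⬝ᵥ x s‖)
        = fun s => Real.sqrt ((star (y s) ⬝ᵥ x s).re * (star (y s) ⬝ᵥ x s).re
          + (star (y s) ⬝ᵥ x s).im * (star (y s) ⬝ᵥ x s).im) := by
      funext s
      rw [Complex.norm_def, Complex.normSq_apply]
    rw [hgoal]
    convert habs using 1
    -- final real arithmetic
    set Aab : ℝ := ‖ft‖ with hAab
    have hApos : 0 < Aab := norm_pos_iff.2 hftne
    have hAsq : ft.re * ft.re + ft.im * ft.im = Aab ^ 2 := by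
      rw [← Complex.normSq_apply, ← Complex.sq_norm]
    have hsqrt : Real.sqrt (ft.re * ft.re + ft.im * ft.im) = Aab := by
      rw [← Complex.normSq_apply, ← Complex.norm_def]
    have hD : (c * ft).re * ft.re + ft.re * (c * ft).re
        + ((c * ft).im * ft.im + ft.im * (c * ft).im)
        = 2 * c.re * (ft.re * ft.re + ft.im * ft.im) := by
      rw [Complex.mul_re, Complex.mul_im]; ring
    rw [hD, hsqrt, hAsq, eq_div_iff (by positivity : (2 : ℝ) * Aab ≠ 0), hu]
    ring
  have nonpos : ∀ t, -(ε * ‖star (y t) ⬝ᵥ x t‖) *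
      (frobNorm (PiP P (Smat (x t) (y t) (G t))) ^ 2
        - (frobInner (E t) (PiP P (Smat (x t) (y t) (G t)))).re ^ 2) ≤ 0 := by
    intro t
    have hE1 : (frobInner (E t) (E t)).re = 1 := by
      have h := frobNorm_sq (E t)
      rw [hEnorm t] at h
      simpa using h.symm
    have hcs := cauchy_schwarz_re (E t) (PiP P (Smat (x t) (y t) (G t))) hE1
    rw [neg_mul, neg_nonpos]
    apply mul_nonneg (mul_nonneg hε.le (norm_nonneg _))
    rw [sub_nonneg, frobNorm_sq]
    exact hcs
  refine ⟨fun t => ⟨main t, nonpos t⟩, ?_⟩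
  apply antitone_of_deriv_nonpos
  · exact fun t => (main t).differentiableAt
  · intro t
    rw [(main t).deriv]
    exact nonpos t
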